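/- Let d > 6 be an integer. For every ε > 0 there exist K ≥ 1 and a constant C = C(d) > 0 such that for every real α ∈ (0, 1/3), every integer r ≥ 1, and every v ∈ ℤ^d with |v| ≥ K, one has ∑_{x ∈ B_{αr}} ∑_{y ∈ B_{αr}} ∑_{z ∈ B_{α²r}} |x|^{2−d} |y − x|^{2−d} |x − z|^{2−d} |z + v − y|^{2−d} (r − |y|)^{−2} ≤ C α² ε, where terms in which any of x, y − x, x − z, z + v − y vanishes are omitted from the sum; here r − |y| ≥ (2/3) r > 0 for y ∈ B_{αr}, and r − |y| equals the ℓ^∞ distance from y to ∂B_r = {x ∈ ℤ^d : |x| = r}. -/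

import Mathlib

open scoped ENNReal

/-- The power `|x|^a` (ℓ^∞ norm of a lattice point, real exponent), valued in `[0,∞]`,
with the convention that the term is omitted (set to `0`) when the base vanishes. -/
noncomputable def latPow {d : ℕ} (x : Fin d → ℤ) (a : ℝ) : ℝ≥0∞ :=
  if x = 0 then 0 else ENNReal.ofReal (‖x‖ ^ a)

namespace S7

variable {d : ℕ}

/-- ℕ-valued sup norm on the lattice. -/
def nrm (x : Fin d → ℤ) : ℕ := Finset.univ.sup fun i => (x i).natAbs

lemma norm_coord (x : Fin d → ℤ) (i : Fin d) : ‖x i‖ = ((x i).natAbs : ℝ) := by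
  rw [Int.norm_eq_abs]
  rw [Nat.cast_natAbs]
  norm_cast

lemma norm_eq_nrm (x : Fin d → ℤ) : ‖x‖ = (nrm x : ℝ) := by
  rcases isEmpty_or_nonempty (Fin d) with h | h
  · simp [Pi.norm_def, nrm]
  · apply le_antisymm
    · rw [pi_norm_le_iff_of_nonneg (by positivity)]
      intro i
      rw [norm_coord]
      exact_mod_cast Finset.le_sup (f := fun i => (x i).natAbs) (Finset.mem_univ i)
    · obtain ⟨i, hi⟩ := Finset.exists_mem_eq_sup Finset.univ
        ⟨Classical.arbitrary _, Finset.mem_univ _⟩ fun i => (x i).natAbs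
      calc (nrm x : ℝ) = ‖x i‖ := by rw [norm_coord, nrm, ← hi.2]
        _ ≤ ‖x‖ := norm_le_pi_norm x i

lemma nrm_triangle (a b : Fin d → ℤ) : nrm (a + b) ≤ nrm a + nrm b := by
  have h := norm_add_le a b
  rw [norm_eq_nrm, norm_eq_nrm, norm_eq_nrm] at h
  exact_mod_cast h

lemma nrm_neg (a : Fin d → ℤ) : nrm (-a) = nrm a := by
  simp [nrm]

lemma nrm_eq_zero {a : Fin d → ℤ} : nrm a = 0 ↔ a = 0 := by
  rw [← @Nat.cast_eq_zero ℝ, ← norm_eq_nrm, norm_eq_zero]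

/-- max of nrm and 1. -/
def Mn (x : Fin d → ℤ) : ℕ := max (nrm x) 1

lemma one_le_Mn (x : Fin d → ℤ) : 1 ≤ Mn x := le_max_right _ _

lemma Mn_pos_real (x : Fin d → ℤ) : (0:ℝ) < (Mn x : ℝ) := by
  exact_mod_cast Nat.lt_of_lt_of_le Nat.zero_lt_one (one_le_Mn x)

lemma Mn_of_ne {x : Fin d → ℤ} (hx : x ≠ 0) : Mn x = nrm x :=
  max_eq_left (Nat.one_le_iff_ne_zero.2 fun h => hx (nrm_eq_zero.1 h))

noncomputable def Q (a : ℝ) (x : Fin d → ℤ) : ℝ≥0∞ := ENNReal.ofReal ((Mn x : ℝ) ^ a)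

lemma latPow_le_Q (x : Fin d → ℤ) (a : ℝ) : latPow x a ≤ Q a x := by
  unfold latPow
  split
  · exact zero_le
  · rename_i hx
    rw [Q, norm_eq_nrm, Mn_of_ne hx]

lemma Q_neg (a : ℝ) (x : Fin d → ℤ) : Q a (-x) = Q a x := by
  simp [Q, Mn, nrm_neg]

lemma Q_le (a : ℝ) (ha : a ≤ 0) {t : ℝ} (ht : 0 < t) {x : Fin d → ℤ}
    (h : t ≤ (Mn x : ℝ)) : Q a x ≤ ENNReal.ofReal (t ^ a) :=
  ENNReal.ofReal_le_ofReal (Real.rpow_le_rpow_of_nonpos ht h ha)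

lemma Q_mul_Q (a b : ℝ) (x : Fin d → ℤ) : Q a x * Q b x = Q (a + b) x := by
  rw [Q, Q, Q, ← ENNReal.ofReal_mul (Real.rpow_nonneg (Mn_pos_real x).le _),
    ← Real.rpow_add (Mn_pos_real x)]


lemma Mn_pos (x : Fin d → ℤ) : 0 < Mn x := one_le_Mn x

lemma tsum_le_card (m : ℕ) (g : (Fin d → ℤ) → ℝ≥0∞) (c : ℝ≥0∞)
    (hb : ∀ x, g x ≤ c) (h0 : ∀ x, m < nrm x → g x = 0) :
    ∑' x, g x ≤ ((2*m+1 : ℕ) : ℝ≥0∞) ^ d * c := by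
  classical
  set s := Fintype.piFinset fun _ : Fin d => Finset.Icc (-(m:ℤ)) (m:ℤ) with hs_def
  have hs : ∀ x ∉ s, g x = 0 := by
    intro x hx
    apply h0
    by_contra h
    push_neg at h
    apply hx
    rw [hs_def, Fintype.mem_piFinset]
    intro i
    rw [Finset.mem_Icc]
    have hle : (x i).natAbs ≤ nrm x := Finset.le_sup (f := fun i => (x i).natAbs) (Finset.mem_univ i)
    have := le_trans hle h
    omega
  rw [tsum_eq_sum hs]
  have hcard : s.card = (2*m+1)^d := by
    rw [hs_def, Fintype.card_piFinset]
    have h1 : ((m:ℤ) + 1 - -(m:ℤ)).toNat = 2*m+1 := by omega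
    simp only [Int.card_Icc, Finset.prod_const, Finset.card_univ, Fintype.card_fin]
    rw [h1]
  calc ∑ x ∈ s, g x ≤ s.card • c := Finset.sum_le_card_nsmul _ _ _ (fun x _ => hb x)
    _ = ((s.card : ℕ) : ℝ≥0∞) * c := nsmul_eq_mul _ _
    _ = _ := by rw [hcard]; push_cast; ring

lemma shell_sum (a : ℝ) (ha : a ≤ 0) (k : ℕ) :
    ∑' x : Fin d → ℤ, (if 2^k ≤ Mn x ∧ Mn x < 2^(k+1) then Q a x else 0)
      ≤ ENNReal.ofReal ((8:ℝ)^d * ((2:ℝ)^k) ^ ((d:ℝ) + a)) := by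
  have h2k : (0:ℝ) < 2^k := by positivity
  have key := tsum_le_card (d := d) (2^(k+1))
    (fun x => if 2^k ≤ Mn x ∧ Mn x < 2^(k+1) then Q a x else 0)
    (ENNReal.ofReal (((2:ℝ)^k) ^ a)) ?_ ?_
  · refine key.trans ?_
    have hcast : (((2*2^(k+1)+1 : ℕ)) : ℝ≥0∞) = ENNReal.ofReal ((2*2^(k+1)+1 : ℕ)) := by
      rw [ENNReal.ofReal_natCast]
    rw [hcast, ← ENNReal.ofReal_pow (by positivity), ← ENNReal.ofReal_mul (by positivity)]
    apply ENNReal.ofReal_le_ofReal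
    have hbase : ((2*2^(k+1)+1 : ℕ) : ℝ) ≤ 8 * 2^k := by
      have hn : (2*2^(k+1)+1 : ℕ) ≤ 8*2^k := by
        have h1 := Nat.one_le_two_pow (n := k)
        rw [pow_succ]
        omega
      exact_mod_cast hn
    have hpow : ((2*2^(k+1)+1 : ℕ) : ℝ)^d ≤ (8 * 2^k)^d :=
      pow_le_pow_left₀ (by positivity) hbase d
    calc ((2*2^(k+1)+1 : ℕ) : ℝ)^d * ((2:ℝ)^k) ^ a ≤ (8 * 2^k)^d * ((2:ℝ)^k) ^ a := by
          apply mul_le_mul_of_nonneg_right hpow (Real.rpow_nonneg h2k.le _)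
      _ = (8:ℝ)^d * ((2:ℝ)^k) ^ ((d:ℝ) + a) := by
          rw [Real.rpow_add h2k, mul_pow]
          rw [← Real.rpow_natCast ((2:ℝ)^k) d]
          ring
  · intro x
    split
    · rename_i h
      exact Q_le a ha (by positivity) (by exact_mod_cast h.1)
    · exact zero_le
  · intro x hx
    rw [if_neg]
    rintro ⟨-, h2⟩
    have : nrm x ≤ Mn x := le_max_left _ _
    omega
lemma geom_le (ρ : ℝ) (hρ : 2 ≤ ρ) (K : ℕ) :
    ∑ k ∈ Finset.range (K+1), ρ^k ≤ 2 * ρ^K := by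
  induction K with
  | zero => norm_num
  | succ n ih =>
    rw [Finset.sum_range_succ]
    have h1 : (0:ℝ) ≤ ρ^n := by positivity
    have h2 : ρ^(n+1) = ρ * ρ^n := by ring
    nlinarith [ih]

lemma rpow_pow (c : ℝ) (k : ℕ) : ((2:ℝ)^k) ^ c = ((2:ℝ) ^ c)^k := by
  rw [← Real.rpow_natCast 2 k, ← Real.rpow_mul (by norm_num), mul_comm,
    Real.rpow_mul (by norm_num), Real.rpow_natCast]

lemma box_sum (a : ℝ) (ha : a ≤ 0) (had : 1 ≤ (d:ℝ) + a) :
    ∃ C : ℝ, 0 < C ∧ ∀ R : ℝ, 1 ≤ R →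
      ∑' x : Fin d → ℤ, (if (nrm x : ℝ) ≤ R then Q a x else 0)
        ≤ ENNReal.ofReal (C * R ^ ((d:ℝ) + a)) := by
  refine ⟨2 * 8^d, by positivity, fun R hR => ?_⟩
  set K := Nat.log 2 ⌊R⌋₊ with hK
  have hfloor : 1 ≤ ⌊R⌋₊ := Nat.le_floor (by exact_mod_cast hR)
  have hρ : (2:ℝ) ≤ (2:ℝ) ^ ((d:ℝ) + a) := by
    calc (2:ℝ) = 2 ^ (1:ℝ) := (Real.rpow_one 2).symm
      _ ≤ _ := Real.rpow_le_rpow_of_exponent_le one_le_two had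
  have hpt : ∀ x : Fin d → ℤ, (if (nrm x : ℝ) ≤ R then Q a x else 0)
      ≤ ∑ k ∈ Finset.range (K+1), (if 2^k ≤ Mn x ∧ Mn x < 2^(k+1) then Q a x else 0) := by
    intro x
    split
    · rename_i h
      set k0 := Nat.log 2 (Mn x) with hk0def
      have h1 : 2^k0 ≤ Mn x := Nat.pow_log_le_self 2 (Mn_pos x).ne'
      have h2 : Mn x < 2^(k0+1) := Nat.lt_pow_succ_log_self one_lt_two _
      have hk0 : k0 ≤ K := by
        apply Nat.log_mono_right
        have hn : nrm x ≤ ⌊R⌋₊ := Nat.le_floor h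
        exact max_le hn hfloor
      calc Q a x = (if 2^k0 ≤ Mn x ∧ Mn x < 2^(k0+1) then Q a x else 0) := by
            rw [if_pos ⟨h1, h2⟩]
        _ ≤ _ := Finset.single_le_sum (f := fun k => if 2^k ≤ Mn x ∧ Mn x < 2^(k+1) then Q a x else 0)
            (fun i _ => zero_le) (Finset.mem_range.2 (Nat.lt_succ_of_le hk0))
    · exact zero_le
  calc ∑' x : Fin d → ℤ, (if (nrm x : ℝ) ≤ R then Q a x else 0)
      ≤ ∑' x : Fin d → ℤ, ∑ k ∈ Finset.range (K+1),
          (if 2^k ≤ Mn x ∧ Mn x < 2^(k+1) then Q a x else 0) := ENNReal.tsum_le_tsum hpt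
    _ = ∑ k ∈ Finset.range (K+1), ∑' x : Fin d → ℤ,
          (if 2^k ≤ Mn x ∧ Mn x < 2^(k+1) then Q a x else 0) :=
        Summable.tsum_finsetSum (fun _ _ => ENNReal.summable)
    _ ≤ ∑ k ∈ Finset.range (K+1), ENNReal.ofReal ((8:ℝ)^d * ((2:ℝ)^k) ^ ((d:ℝ) + a)) :=
        Finset.sum_le_sum (fun k _ => shell_sum a ha k)
    _ = ENNReal.ofReal (∑ k ∈ Finset.range (K+1), (8:ℝ)^d * ((2:ℝ)^k) ^ ((d:ℝ) + a)) :=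
        (ENNReal.ofReal_sum_of_nonneg (fun k _ => by positivity)).symm
    _ ≤ ENNReal.ofReal ((2 * 8^d) * R ^ ((d:ℝ) + a)) := ENNReal.ofReal_le_ofReal ?_
  have hsum : ∑ k ∈ Finset.range (K+1), (8:ℝ)^d * ((2:ℝ)^k) ^ ((d:ℝ) + a)
      = 8^d * ∑ k ∈ Finset.range (K+1), ((2:ℝ) ^ ((d:ℝ) + a))^k := by
    rw [Finset.mul_sum]
    exact Finset.sum_congr rfl (fun k _ => by rw [rpow_pow])
  rw [hsum]
  have hKR : ((2:ℝ)^K) ≤ R := by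
    have h1 : (2:ℕ)^K ≤ ⌊R⌋₊ := Nat.pow_log_le_self 2 (by omega)
    have h2 : (⌊R⌋₊ : ℝ) ≤ R := Nat.floor_le (by linarith)
    calc ((2:ℝ)^K) = ((2^K : ℕ) : ℝ) := by push_cast; ring
      _ ≤ (⌊R⌋₊ : ℝ) := by exact_mod_cast h1
      _ ≤ R := h2
  have hgeom := geom_le _ hρ K
  have hlast : ((2:ℝ) ^ ((d:ℝ) + a))^K ≤ R ^ ((d:ℝ) + a) := by
    rw [← rpow_pow]
    exact Real.rpow_le_rpow (by positivity) hKR (by linarith)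
  have h8 : (0:ℝ) < 8^d := by positivity
  nlinarith [hgeom, hlast, h8]

lemma tail_sum (a : ℝ) (had : (d:ℝ) + a ≤ -1) :
    ∃ C : ℝ, 0 < C ∧ ∀ R : ℝ, 1 ≤ R →
      ∑' x : Fin d → ℤ, (if R ≤ (Mn x : ℝ) then Q a x else 0)
        ≤ ENNReal.ofReal (C * R ^ ((d:ℝ) + a)) := by
  refine ⟨2 * 8^d * (2:ℝ)^(-((d:ℝ)+a)), by positivity, fun R hR => ?_⟩
  set K := Nat.log 2 ⌈R⌉₊ with hK
  have hceil : 1 ≤ ⌈R⌉₊ := Nat.one_le_ceil_iff.mpr (by linarith)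
  have hpt : ∀ x : Fin d → ℤ, (if R ≤ (Mn x : ℝ) then Q a x else 0)
      ≤ ∑' j : ℕ, (if 2^(K+j) ≤ Mn x ∧ Mn x < 2^(K+j+1) then Q a x else 0) := by
    intro x
    split
    · rename_i h
      set k0 := Nat.log 2 (Mn x) with hk0def
      have h1 : 2^k0 ≤ Mn x := Nat.pow_log_le_self 2 (Mn_pos x).ne'
      have h2 : Mn x < 2^(k0+1) := Nat.lt_pow_succ_log_self one_lt_two _
      have hk0 : K ≤ k0 := Nat.log_mono_right (Nat.ceil_le.2 h)
      have hj : K + (k0 - K) = k0 := by omega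
      have := ENNReal.le_tsum (f := fun j => if 2^(K+j) ≤ Mn x ∧ Mn x < 2^(K+j+1) then Q a x else 0) (k0 - K)
      simp only [hj] at this
      rwa [if_pos ⟨h1, h2⟩] at this
    · exact zero_le
  have hqle : ENNReal.ofReal ((2:ℝ) ^ ((d:ℝ) + a)) ≤ 2⁻¹ := by
    have h1 : (2:ℝ) ^ ((d:ℝ) + a) ≤ 2 ^ (-1:ℝ) :=
      Real.rpow_le_rpow_of_exponent_le one_le_two had
    have h2 : (2:ℝ) ^ (-1:ℝ) = 1/2 := by
      rw [Real.rpow_neg_one]; norm_num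
    rw [h2] at h1
    calc ENNReal.ofReal ((2:ℝ) ^ ((d:ℝ) + a)) ≤ ENNReal.ofReal (1/2) := ENNReal.ofReal_le_ofReal h1
      _ = 2⁻¹ := by rw [ENNReal.ofReal_div_of_pos] <;> norm_num
  calc ∑' x : Fin d → ℤ, (if R ≤ (Mn x : ℝ) then Q a x else 0)
      ≤ ∑' x : Fin d → ℤ, ∑' j : ℕ, (if 2^(K+j) ≤ Mn x ∧ Mn x < 2^(K+j+1) then Q a x else 0) :=
        ENNReal.tsum_le_tsum hpt
    _ = ∑' j : ℕ, ∑' x : Fin d → ℤ, (if 2^(K+j) ≤ Mn x ∧ Mn x < 2^(K+j+1) then Q a x else 0) :=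
        ENNReal.tsum_comm
    _ ≤ ∑' j : ℕ, ENNReal.ofReal ((8:ℝ)^d * ((2:ℝ)^(K+j)) ^ ((d:ℝ) + a)) :=
        ENNReal.tsum_le_tsum (fun j => shell_sum a (by linarith [Nat.cast_nonneg (α := ℝ) d]) (K+j))
    _ = ∑' j : ℕ, ENNReal.ofReal ((8:ℝ)^d * ((2:ℝ)^K) ^ ((d:ℝ) + a)) *
          (ENNReal.ofReal ((2:ℝ) ^ ((d:ℝ) + a)))^j := by
        refine tsum_congr (fun j => ?_)
        rw [← ENNReal.ofReal_pow (by positivity), ← ENNReal.ofReal_mul (by positivity)]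
        congr 1
        rw [pow_add, Real.mul_rpow (by positivity) (by positivity), ← rpow_pow]
        ring
    _ = ENNReal.ofReal ((8:ℝ)^d * ((2:ℝ)^K) ^ ((d:ℝ) + a)) *
          ∑' j : ℕ, (ENNReal.ofReal ((2:ℝ) ^ ((d:ℝ) + a)))^j := ENNReal.tsum_mul_left
    _ ≤ ENNReal.ofReal ((8:ℝ)^d * ((2:ℝ)^K) ^ ((d:ℝ) + a)) * ∑' j : ℕ, (2⁻¹ : ℝ≥0∞)^j := by
        gcongr
    _ = ENNReal.ofReal ((8:ℝ)^d * ((2:ℝ)^K) ^ ((d:ℝ) + a)) * 2 := by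
        rw [ENNReal.tsum_geometric, ENNReal.one_sub_inv_two, inv_inv]
    _ ≤ ENNReal.ofReal ((2 * 8^d * (2:ℝ)^(-((d:ℝ)+a))) * R ^ ((d:ℝ) + a)) := ?_
  rw [← ENNReal.ofReal_ofNat, ← ENNReal.ofReal_mul (by positivity)]
  apply ENNReal.ofReal_le_ofReal
  have hRK : R / 2 ≤ (2:ℝ)^K := by
    have h1 : (⌈R⌉₊ : ℕ) < 2^(K+1) := Nat.lt_pow_succ_log_self one_lt_two _
    have h2 : R ≤ (⌈R⌉₊ : ℝ) := Nat.le_ceil R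
    have h3 : ((⌈R⌉₊ : ℕ) : ℝ) ≤ (2:ℝ)^(K+1) := by exact_mod_cast h1.le
    have h4 : (2:ℝ)^(K+1) = 2 * 2^K := by ring
    linarith
  have h5 : ((2:ℝ)^K) ^ ((d:ℝ) + a) ≤ (R/2) ^ ((d:ℝ) + a) :=
    Real.rpow_le_rpow_of_nonpos (by linarith) hRK (by linarith)
  have h6 : (R/2) ^ ((d:ℝ) + a) = R ^ ((d:ℝ) + a) * (2:ℝ)^(-((d:ℝ)+a)) := by
    rw [Real.div_rpow (by linarith) (by norm_num), Real.rpow_neg (by norm_num)]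
    ring
  have h7 : (0:ℝ) < 8^d := by positivity
  have h8 : (0:ℝ) ≤ R ^ ((d:ℝ) + a) := Real.rpow_nonneg (by linarith) _
  have h56 : ((2:ℝ)^K) ^ ((d:ℝ) + a) ≤ R ^ ((d:ℝ) + a) * (2:ℝ)^(-((d:ℝ)+a)) := h6 ▸ h5
  calc (8:ℝ)^d * ((2:ℝ)^K) ^ ((d:ℝ) + a) * 2 = (2*8^d) * (((2:ℝ)^K) ^ ((d:ℝ) + a)) := by ring
    _ ≤ (2*8^d) * (R ^ ((d:ℝ) + a) * (2:ℝ)^(-((d:ℝ)+a))) :=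
        mul_le_mul_of_nonneg_left h56 (by positivity)
    _ = 2 * 8^d * (2:ℝ)^(-((d:ℝ)+a)) * R ^ ((d:ℝ) + a) := by ring
lemma conv_aux (a b : ℝ) (ha : a ≤ 0) (hb : b ≤ 0) (hda : 1 ≤ (d:ℝ) + a)
    (hs : (d:ℝ) + (a + b) ≤ -1) :
    ∃ C : ℝ, 0 < C ∧ ∀ v : Fin d → ℤ,
      ∑' w : Fin d → ℤ, (if nrm w ≤ nrm (v - w) then Q a w * Q b (v - w) else 0)
        ≤ ENNReal.ofReal (C * (Mn v : ℝ) ^ ((d:ℝ) + a + b)) := by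
  obtain ⟨C1, hC1, hbox⟩ := box_sum a ha hda
  obtain ⟨C2, hC2, htail⟩ := tail_sum (a+b) hs
  refine ⟨(2:ℝ)^(-b) * C1 + C2, by positivity, fun v => ?_⟩
  set MR : ℝ := (Mn v : ℝ) with hMR
  have hMR1 : 1 ≤ MR := by rw [hMR]; exact_mod_cast one_le_Mn v
  have hMRpos : 0 < MR := by linarith
  have hgeo : ∀ w : Fin d → ℤ, nrm w ≤ nrm (v - w) → (MR/2 : ℝ) ≤ (Mn (v - w) : ℝ) := by
    intro w hw
    have htri : nrm v ≤ nrm w + nrm (v - w) := by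
      have h := nrm_triangle w (v - w)
      rwa [add_sub_cancel] at h
    have h2 : Mn v ≤ 2 * Mn (v - w) := by
      unfold Mn at *
      omega
    rw [hMR]
    have h3 : (Mn v : ℝ) ≤ 2 * (Mn (v - w) : ℝ) := by exact_mod_cast h2
    linarith
  have hpt : ∀ w : Fin d → ℤ,
      (if nrm w ≤ nrm (v - w) then Q a w * Q b (v - w) else 0)
      ≤ (if (nrm w : ℝ) ≤ MR then Q a w else 0) * ENNReal.ofReal ((MR/2) ^ b)
        + (if MR ≤ (Mn w : ℝ) then Q (a+b) w else 0) := by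
    intro w
    split
    · rename_i hw
      rcases le_or_gt ((nrm w : ℝ)) MR with hle | hgt
      · apply le_add_right
        rw [if_pos hle]
        exact mul_le_mul_right (Q_le b hb (by linarith) (hgeo w hw)) _
      · apply le_add_left
        have hMnw : MR ≤ (Mn w : ℝ) := by
          have : (nrm w : ℝ) ≤ (Mn w : ℝ) := by exact_mod_cast (le_max_left (nrm w) 1)
          linarith
        rw [if_pos hMnw, ← Q_mul_Q a b w]
        apply mul_le_mul_right
        have hle2 : (Mn w : ℝ) ≤ (Mn (v - w) : ℝ) := by
          exact_mod_cast max_le_max hw (le_refl 1)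
        exact Q_le b hb (Mn_pos_real w) hle2
    · exact zero_le
  calc ∑' w : Fin d → ℤ, (if nrm w ≤ nrm (v - w) then Q a w * Q b (v - w) else 0)
      ≤ ∑' w : Fin d → ℤ, ((if (nrm w : ℝ) ≤ MR then Q a w else 0) * ENNReal.ofReal ((MR/2) ^ b)
          + (if MR ≤ (Mn w : ℝ) then Q (a+b) w else 0)) := ENNReal.tsum_le_tsum hpt
    _ = (∑' w : Fin d → ℤ, (if (nrm w : ℝ) ≤ MR then Q a w else 0)) * ENNReal.ofReal ((MR/2) ^ b)
          + ∑' w : Fin d → ℤ, (if MR ≤ (Mn w : ℝ) then Q (a+b) w else 0) := by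
        rw [ENNReal.tsum_add, ENNReal.tsum_mul_right]
    _ ≤ ENNReal.ofReal (C1 * MR ^ ((d:ℝ) + a)) * ENNReal.ofReal ((MR/2) ^ b)
          + ENNReal.ofReal (C2 * MR ^ ((d:ℝ) + (a+b))) := by
        gcongr
        · exact hbox MR hMR1
        · exact htail MR hMR1
    _ ≤ ENNReal.ofReal (((2:ℝ)^(-b) * C1 + C2) * MR ^ ((d:ℝ) + a + b)) := by
        rw [← ENNReal.ofReal_mul (by positivity), ← ENNReal.ofReal_add (by positivity) (by positivity)]
        apply ENNReal.ofReal_le_ofReal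
        have e1 : (MR/2) ^ b = MR ^ b * (2:ℝ) ^ (-b) := by
          rw [Real.div_rpow (by linarith) (by norm_num), Real.rpow_neg (by norm_num)]
          ring
        have e2 : MR ^ ((d:ℝ) + a) * MR ^ b = MR ^ ((d:ℝ) + a + b) := by
          rw [← Real.rpow_add hMRpos]
        have e3 : MR ^ ((d:ℝ) + (a+b)) = MR ^ ((d:ℝ) + a + b) := by ring_nf
        apply le_of_eq
        rw [e1, e3, ← e2]
        ring

lemma conv_base (a b : ℝ) (ha : a ≤ 0) (hb : b ≤ 0) (hda : 1 ≤ (d:ℝ) + a)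
    (hdb : 1 ≤ (d:ℝ) + b) (hs : (d:ℝ) + a + b ≤ -1) :
    ∃ C : ℝ, 0 < C ∧ ∀ v : Fin d → ℤ,
      ∑' w : Fin d → ℤ, Q a w * Q b (v - w)
        ≤ ENNReal.ofReal (C * (Mn v : ℝ) ^ ((d:ℝ) + a + b)) := by
  obtain ⟨CA, hCA, hA⟩ := conv_aux a b ha hb hda (by linarith)
  obtain ⟨CB, hCB, hB⟩ := conv_aux b a hb ha hdb (by linarith)
  refine ⟨CA + CB, by positivity, fun v => ?_⟩
  have hMR1 : 1 ≤ (Mn v : ℝ) := by exact_mod_cast one_le_Mn v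
  have hsplit : ∀ w : Fin d → ℤ, Q a w * Q b (v - w)
      ≤ (if nrm w ≤ nrm (v - w) then Q a w * Q b (v - w) else 0)
        + (if nrm (v - w) < nrm w then Q a w * Q b (v - w) else 0) := by
    intro w
    rcases le_or_gt (nrm w) (nrm (v - w)) with h | h
    · rw [if_pos h, if_neg (not_lt.2 h), add_zero]
    · rw [if_neg (not_le.2 h), if_pos h, zero_add]
  have hBpart : ∑' w : Fin d → ℤ, (if nrm (v - w) < nrm w then Q a w * Q b (v - w) else 0)
      ≤ ENNReal.ofReal (CB * (Mn v : ℝ) ^ ((d:ℝ) + b + a)) := by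
    have hre := (Equiv.subLeft v).tsum_eq
      (fun w => if nrm (v - w) < nrm w then Q a w * Q b (v - w) else 0)
    rw [← hre]
    simp only [Equiv.subLeft_apply, sub_sub_cancel]
    calc ∑' u : Fin d → ℤ, (if nrm u < nrm (v - u) then Q a (v - u) * Q b u else 0)
        ≤ ∑' u : Fin d → ℤ, (if nrm u ≤ nrm (v - u) then Q b u * Q a (v - u) else 0) := by
          apply ENNReal.tsum_le_tsum
          intro u
          split
          · rename_i h
            rw [if_pos h.le, mul_comm]
          · exact zero_le
      _ ≤ _ := hB v
  calc ∑' w : Fin d → ℤ, Q a w * Q b (v - w)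
      ≤ ∑' w : Fin d → ℤ, ((if nrm w ≤ nrm (v - w) then Q a w * Q b (v - w) else 0)
          + (if nrm (v - w) < nrm w then Q a w * Q b (v - w) else 0)) :=
        ENNReal.tsum_le_tsum hsplit
    _ = (∑' w : Fin d → ℤ, (if nrm w ≤ nrm (v - w) then Q a w * Q b (v - w) else 0))
          + ∑' w : Fin d → ℤ, (if nrm (v - w) < nrm w then Q a w * Q b (v - w) else 0) :=
        ENNReal.tsum_add
    _ ≤ ENNReal.ofReal (CA * (Mn v : ℝ) ^ ((d:ℝ) + a + b))
          + ENNReal.ofReal (CB * (Mn v : ℝ) ^ ((d:ℝ) + b + a)) := add_le_add (hA v) hBpart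
    _ = ENNReal.ofReal ((CA + CB) * (Mn v : ℝ) ^ ((d:ℝ) + a + b)) := by
        rw [← ENNReal.ofReal_add (by positivity) (by positivity)]
        congr 1
        rw [show (d:ℝ) + b + a = (d:ℝ) + a + b from by ring]
        ring

lemma conv (a b : ℝ) (ha : a ≤ 0) (hb : b ≤ 0) (hda : 1 ≤ (d:ℝ) + a)
    (hdb : 1 ≤ (d:ℝ) + b) (hs : (d:ℝ) + a + b ≤ -1) :
    ∃ C : ℝ, 0 < C ∧ ∀ p q : Fin d → ℤ,
      ∑' y : Fin d → ℤ, Q a (y - p) * Q b (q - y)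
        ≤ ENNReal.ofReal C * Q ((d:ℝ) + a + b) (q - p) := by
  obtain ⟨C, hC, h⟩ := conv_base a b ha hb hda hdb hs
  refine ⟨C, hC, fun p q => ?_⟩
  have hre := (Equiv.addRight p).tsum_eq (fun y => Q a (y - p) * Q b (q - y))
  rw [← hre]
  simp only [Equiv.coe_addRight, add_sub_cancel_right]
  have heq : ∀ w : Fin d → ℤ, q - (w + p) = (q - p) - w := by
    intro w; abel
  calc ∑' w : Fin d → ℤ, Q a w * Q b (q - (w + p))
      = ∑' w : Fin d → ℤ, Q a w * Q b ((q - p) - w) := by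
        exact tsum_congr (fun w => by rw [heq w])
    _ ≤ ENNReal.ofReal (C * (Mn (q - p) : ℝ) ^ ((d:ℝ) + a + b)) := h (q - p)
    _ = ENNReal.ofReal C * Q ((d:ℝ) + a + b) (q - p) := by
        rw [Q, ← ENNReal.ofReal_mul hC.le]
end S7

theorem statement7 (d : ℕ) (hd : 6 < d) :
    ∃ C : ℝ, 0 < C ∧ ∀ ε : ℝ, 0 < ε → ∃ K : ℝ, 1 ≤ K ∧
      ∀ α : ℝ, 0 < α → α < 1 / 3 → ∀ r : ℕ, 1 ≤ r → ∀ v : Fin d → ℤ, K ≤ ‖v‖ →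
      ∑' x : {x : Fin d → ℤ // ‖x‖ ≤ α * r},
      ∑' y : {y : Fin d → ℤ // ‖y‖ ≤ α * r},
      ∑' z : {z : Fin d → ℤ // ‖z‖ ≤ α ^ 2 * r},
        latPow x.1 ((2 : ℝ) - d) * latPow (y.1 - x.1) ((2 : ℝ) - d) *
          latPow (x.1 - z.1) ((2 : ℝ) - d) * latPow (z.1 + v - y.1) ((2 : ℝ) - d) *
          ENNReal.ofReal (((r : ℝ) - ‖y.1‖) ^ (-2 : ℝ)) ≤
        ENNReal.ofReal (C * α ^ 2 * ε) := by
  have hd7 : (7:ℝ) ≤ (d:ℝ) := by exact_mod_cast hd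
  obtain ⟨C1, hC1, hbox⟩ := S7.box_sum (d := d) (2 - (d:ℝ)) (by linarith) (by linarith)
  obtain ⟨C2, hC2, hconv1⟩ := S7.conv (d := d) (2 - (d:ℝ)) (2 - (d:ℝ))
    (by linarith) (by linarith) (by linarith) (by linarith) (by linarith)
  obtain ⟨C3, hC3, hconv2⟩ := S7.conv (d := d) (2 - (d:ℝ)) (4 - (d:ℝ))
    (by linarith) (by linarith) (by linarith) (by linarith) (by linarith)
  refine ⟨3 * C1 * C2 * C3, by positivity, fun ε hε => ?_⟩
  refine ⟨max 1 (ε ^ (-(1:ℝ)/((d:ℝ) - 6))), le_max_left _ _, ?_⟩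
  set K : ℝ := max 1 (ε ^ (-(1:ℝ)/((d:ℝ) - 6))) with hKdef
  have hK1 : (1:ℝ) ≤ K := le_max_left _ _
  have hKpos : (0:ℝ) < K := by linarith
  have hKe : K ^ ((6:ℝ) - (d:ℝ)) ≤ ε := by
    rcases le_or_gt 1 ε with h1 | h1
    · calc K ^ ((6:ℝ)-(d:ℝ)) ≤ 1 :=
          Real.rpow_le_one_of_one_le_of_nonpos hK1 (by linarith)
        _ ≤ ε := h1
    · have hgt : 1 ≤ ε ^ (-(1:ℝ)/((d:ℝ) - 6)) := by
        apply Real.one_le_rpow_of_pos_of_le_one_of_nonpos hε h1.le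
        apply div_nonpos_of_nonpos_of_nonneg <;> linarith
      have hKmax : K = ε ^ (-(1:ℝ)/((d:ℝ) - 6)) := max_eq_right hgt
      rw [hKmax, ← Real.rpow_mul hε.le]
      have hexp : (-(1:ℝ)/((d:ℝ) - 6)) * ((6:ℝ) - (d:ℝ)) = 1 := by
        have hne : (d:ℝ) - 6 ≠ 0 := by linarith
        field_simp
        ring
      rw [hexp, Real.rpow_one]
  intro α hα hα3 r hr v hv
  have hr1 : (1:ℝ) ≤ (r:ℝ) := by exact_mod_cast hr
  have hrpos : (0:ℝ) < (r:ℝ) := by linarith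
  rcases lt_or_ge (α * (r:ℝ)) 1 with hsmall | hbig
  · -- all x are 0, sum vanishes
    have hzero : (∑' x : {x : Fin d → ℤ // ‖x‖ ≤ α * r},
        ∑' y : {y : Fin d → ℤ // ‖y‖ ≤ α * r},
        ∑' z : {z : Fin d → ℤ // ‖z‖ ≤ α ^ 2 * r},
          latPow x.1 ((2 : ℝ) - d) * latPow (y.1 - x.1) ((2 : ℝ) - d) *
            latPow (x.1 - z.1) ((2 : ℝ) - d) * latPow (z.1 + v - y.1) ((2 : ℝ) - d) *
            ENNReal.ofReal (((r : ℝ) - ‖y.1‖) ^ (-2 : ℝ))) = 0 := by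
      rw [ENNReal.tsum_eq_zero]
      intro x
      rw [ENNReal.tsum_eq_zero]
      intro y
      rw [ENNReal.tsum_eq_zero]
      intro z
      have hx0 : x.1 = 0 := by
        by_contra hne
        have h1 : (1:ℝ) ≤ ‖x.1‖ := by
          rw [S7.norm_eq_nrm]
          have h2 : 1 ≤ S7.nrm x.1 :=
            Nat.one_le_iff_ne_zero.2 (fun h => hne (S7.nrm_eq_zero.1 h))
          exact_mod_cast h2
        linarith [x.2]
      simp [latPow, hx0]
    rw [hzero]
    exact zero_le
  · -- main case
    have hE : ∀ y : Fin d → ℤ, ‖y‖ ≤ α * r →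
        ENNReal.ofReal (((r:ℝ) - ‖y‖) ^ (-2:ℝ)) ≤ ENNReal.ofReal ((2*(r:ℝ)/3) ^ (-2:ℝ)) := by
      intro y hy
      apply ENNReal.ofReal_le_ofReal
      apply Real.rpow_le_rpow_of_nonpos (by linarith) ?_ (by norm_num)
      nlinarith
    -- z-level bound
    have hzlev : ∀ (x : {x : Fin d → ℤ // ‖x‖ ≤ α * r}) (y : {y : Fin d → ℤ // ‖y‖ ≤ α * r}),
        (∑' z : {z : Fin d → ℤ // ‖z‖ ≤ α ^ 2 * r},
          latPow x.1 ((2 : ℝ) - d) * latPow (y.1 - x.1) ((2 : ℝ) - d) *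
            latPow (x.1 - z.1) ((2 : ℝ) - d) * latPow (z.1 + v - y.1) ((2 : ℝ) - d) *
            ENNReal.ofReal (((r : ℝ) - ‖y.1‖) ^ (-2 : ℝ)))
        ≤ (latPow x.1 ((2:ℝ) - d) * ENNReal.ofReal ((2*(r:ℝ)/3) ^ (-2:ℝ)) * ENNReal.ofReal C2)
            * (S7.Q ((2:ℝ)-d) (y.1 - x.1) * S7.Q ((4:ℝ)-d) ((v + x.1) - y.1)) := by
      intro x y
      calc (∑' z : {z : Fin d → ℤ // ‖z‖ ≤ α ^ 2 * r},
          latPow x.1 ((2 : ℝ) - d) * latPow (y.1 - x.1) ((2 : ℝ) - d) *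
            latPow (x.1 - z.1) ((2 : ℝ) - d) * latPow (z.1 + v - y.1) ((2 : ℝ) - d) *
            ENNReal.ofReal (((r : ℝ) - ‖y.1‖) ^ (-2 : ℝ)))
          ≤ ∑' z : {z : Fin d → ℤ // ‖z‖ ≤ α ^ 2 * r},
            (latPow x.1 ((2:ℝ) - d) * S7.Q ((2:ℝ)-d) (y.1 - x.1) *
              ENNReal.ofReal ((2*(r:ℝ)/3) ^ (-2:ℝ)))
            * (S7.Q ((2:ℝ)-d) (x.1 - z.1) * S7.Q ((2:ℝ)-d) (z.1 + v - y.1)) := by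
            apply ENNReal.tsum_le_tsum
            intro z
            calc latPow x.1 ((2 : ℝ) - d) * latPow (y.1 - x.1) ((2 : ℝ) - d) *
                latPow (x.1 - z.1) ((2 : ℝ) - d) * latPow (z.1 + v - y.1) ((2 : ℝ) - d) *
                ENNReal.ofReal (((r : ℝ) - ‖y.1‖) ^ (-2 : ℝ))
                ≤ latPow x.1 ((2 : ℝ) - d) * S7.Q ((2:ℝ) - d) (y.1 - x.1) *
                  S7.Q ((2:ℝ) - d) (x.1 - z.1) * S7.Q ((2:ℝ) - d) (z.1 + v - y.1) *
                  ENNReal.ofReal ((2*(r:ℝ)/3) ^ (-2:ℝ)) := by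
                  gcongr ?_ * ?_ * ?_ * ?_ * ?_
                  · exact le_rfl
                  · exact S7.latPow_le_Q _ _
                  · exact S7.latPow_le_Q _ _
                  · exact S7.latPow_le_Q _ _
                  · exact hE y.1 y.2
              _ = (latPow x.1 ((2:ℝ) - d) * S7.Q ((2:ℝ)-d) (y.1 - x.1) *
                    ENNReal.ofReal ((2*(r:ℝ)/3) ^ (-2:ℝ)))
                  * (S7.Q ((2:ℝ)-d) (x.1 - z.1) * S7.Q ((2:ℝ)-d) (z.1 + v - y.1)) := by ring
        _ = (latPow x.1 ((2:ℝ) - d) * S7.Q ((2:ℝ)-d) (y.1 - x.1) *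
              ENNReal.ofReal ((2*(r:ℝ)/3) ^ (-2:ℝ)))
            * ∑' z : {z : Fin d → ℤ // ‖z‖ ≤ α ^ 2 * r},
              (S7.Q ((2:ℝ)-d) (x.1 - z.1) * S7.Q ((2:ℝ)-d) (z.1 + v - y.1)) :=
            ENNReal.tsum_mul_left
        _ ≤ (latPow x.1 ((2:ℝ) - d) * S7.Q ((2:ℝ)-d) (y.1 - x.1) *
              ENNReal.ofReal ((2*(r:ℝ)/3) ^ (-2:ℝ)))
            * ∑' z : Fin d → ℤ,
              (S7.Q ((2:ℝ)-d) (x.1 - z) * S7.Q ((2:ℝ)-d) (z + v - y.1)) := by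
            apply mul_le_mul_right
            exact ENNReal.tsum_comp_le_tsum_of_injective Subtype.coe_injective
              (fun z => S7.Q ((2:ℝ)-d) (x.1 - z) * S7.Q ((2:ℝ)-d) (z + v - y.1))
        _ ≤ (latPow x.1 ((2:ℝ) - d) * S7.Q ((2:ℝ)-d) (y.1 - x.1) *
              ENNReal.ofReal ((2*(r:ℝ)/3) ^ (-2:ℝ)))
            * (ENNReal.ofReal C2 * S7.Q ((4:ℝ)-d) (y.1 - v - x.1)) := by
            apply mul_le_mul_right
            have hshape : ∀ z : Fin d → ℤ, S7.Q ((2:ℝ)-d) (x.1 - z) * S7.Q ((2:ℝ)-d) (z + v - y.1)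
                = S7.Q (2-(d:ℝ)) (z - x.1) * S7.Q (2-(d:ℝ)) ((y.1 - v) - z) := by
              intro z
              rw [show x.1 - z = -(z - x.1) from by abel,
                show z + v - y.1 = -((y.1 - v) - z) from by abel, S7.Q_neg, S7.Q_neg]
            rw [tsum_congr hshape]
            have h := hconv1 x.1 (y.1 - v)
            rw [show (d:ℝ) + (2-(d:ℝ)) + (2-(d:ℝ)) = (4:ℝ) - (d:ℝ) from by ring] at h
            exact h
        _ = (latPow x.1 ((2:ℝ) - d) * ENNReal.ofReal ((2*(r:ℝ)/3) ^ (-2:ℝ)) * ENNReal.ofReal C2)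
            * (S7.Q ((2:ℝ)-d) (y.1 - x.1) * S7.Q ((4:ℝ)-d) ((v + x.1) - y.1)) := by
            rw [show y.1 - v - x.1 = -((v + x.1) - y.1) from by abel, S7.Q_neg]
            ring
    -- y-level bound
    have hylev : ∀ x : {x : Fin d → ℤ // ‖x‖ ≤ α * r},
        (∑' y : {y : Fin d → ℤ // ‖y‖ ≤ α * r},
         ∑' z : {z : Fin d → ℤ // ‖z‖ ≤ α ^ 2 * r},
          latPow x.1 ((2 : ℝ) - d) * latPow (y.1 - x.1) ((2 : ℝ) - d) *
            latPow (x.1 - z.1) ((2 : ℝ) - d) * latPow (z.1 + v - y.1) ((2 : ℝ) - d) *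
            ENNReal.ofReal (((r : ℝ) - ‖y.1‖) ^ (-2 : ℝ)))
        ≤ latPow x.1 ((2:ℝ) - d) *
            (ENNReal.ofReal ((2*(r:ℝ)/3) ^ (-2:ℝ)) * ENNReal.ofReal C2 * ENNReal.ofReal C3 *
              S7.Q ((6:ℝ)-d) v) := by
      intro x
      calc (∑' y : {y : Fin d → ℤ // ‖y‖ ≤ α * r},
         ∑' z : {z : Fin d → ℤ // ‖z‖ ≤ α ^ 2 * r},
          latPow x.1 ((2 : ℝ) - d) * latPow (y.1 - x.1) ((2 : ℝ) - d) *
            latPow (x.1 - z.1) ((2 : ℝ) - d) * latPow (z.1 + v - y.1) ((2 : ℝ) - d) *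
            ENNReal.ofReal (((r : ℝ) - ‖y.1‖) ^ (-2 : ℝ)))
          ≤ ∑' y : {y : Fin d → ℤ // ‖y‖ ≤ α * r},
              (latPow x.1 ((2:ℝ) - d) * ENNReal.ofReal ((2*(r:ℝ)/3) ^ (-2:ℝ)) *
                ENNReal.ofReal C2)
              * (S7.Q ((2:ℝ)-d) (y.1 - x.1) * S7.Q ((4:ℝ)-d) ((v + x.1) - y.1)) :=
            ENNReal.tsum_le_tsum (hzlev x)
        _ = (latPow x.1 ((2:ℝ) - d) * ENNReal.ofReal ((2*(r:ℝ)/3) ^ (-2:ℝ)) *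
              ENNReal.ofReal C2)
            * ∑' y : {y : Fin d → ℤ // ‖y‖ ≤ α * r},
              (S7.Q ((2:ℝ)-d) (y.1 - x.1) * S7.Q ((4:ℝ)-d) ((v + x.1) - y.1)) :=
            ENNReal.tsum_mul_left
        _ ≤ (latPow x.1 ((2:ℝ) - d) * ENNReal.ofReal ((2*(r:ℝ)/3) ^ (-2:ℝ)) *
              ENNReal.ofReal C2)
            * ∑' y : Fin d → ℤ,
              (S7.Q ((2:ℝ)-d) (y - x.1) * S7.Q ((4:ℝ)-d) ((v + x.1) - y)) := by
            apply mul_le_mul_right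
            exact ENNReal.tsum_comp_le_tsum_of_injective Subtype.coe_injective
              (fun y => S7.Q ((2:ℝ)-d) (y - x.1) * S7.Q ((4:ℝ)-d) ((v + x.1) - y))
        _ ≤ (latPow x.1 ((2:ℝ) - d) * ENNReal.ofReal ((2*(r:ℝ)/3) ^ (-2:ℝ)) *
              ENNReal.ofReal C2)
            * (ENNReal.ofReal C3 * S7.Q ((6:ℝ)-d) v) := by
            apply mul_le_mul_right
            have h := hconv2 x.1 (v + x.1)
            rw [show (d:ℝ) + (2-(d:ℝ)) + (4-(d:ℝ)) = (6:ℝ) - (d:ℝ) from by ring] at h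
            rw [show v + x.1 - x.1 = v from by abel] at h
            exact h
        _ = latPow x.1 ((2:ℝ) - d) *
            (ENNReal.ofReal ((2*(r:ℝ)/3) ^ (-2:ℝ)) * ENNReal.ofReal C2 * ENNReal.ofReal C3 *
              S7.Q ((6:ℝ)-d) v) := by ring
    -- x-level
    calc (∑' x : {x : Fin d → ℤ // ‖x‖ ≤ α * r},
      ∑' y : {y : Fin d → ℤ // ‖y‖ ≤ α * r},
      ∑' z : {z : Fin d → ℤ // ‖z‖ ≤ α ^ 2 * r},
        latPow x.1 ((2 : ℝ) - d) * latPow (y.1 - x.1) ((2 : ℝ) - d) *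
          latPow (x.1 - z.1) ((2 : ℝ) - d) * latPow (z.1 + v - y.1) ((2 : ℝ) - d) *
          ENNReal.ofReal (((r : ℝ) - ‖y.1‖) ^ (-2 : ℝ)))
        ≤ ∑' x : {x : Fin d → ℤ // ‖x‖ ≤ α * r}, latPow x.1 ((2:ℝ) - d) *
            (ENNReal.ofReal ((2*(r:ℝ)/3) ^ (-2:ℝ)) * ENNReal.ofReal C2 * ENNReal.ofReal C3 *
              S7.Q ((6:ℝ)-d) v) := ENNReal.tsum_le_tsum hylev
      _ = (∑' x : {x : Fin d → ℤ // ‖x‖ ≤ α * r}, latPow x.1 ((2:ℝ) - d)) *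
            (ENNReal.ofReal ((2*(r:ℝ)/3) ^ (-2:ℝ)) * ENNReal.ofReal C2 * ENNReal.ofReal C3 *
              S7.Q ((6:ℝ)-d) v) := ENNReal.tsum_mul_right
      _ ≤ ENNReal.ofReal (C1 * (α*(r:ℝ)) ^ ((d:ℝ) + (2 - (d:ℝ)))) *
            (ENNReal.ofReal ((2*(r:ℝ)/3) ^ (-2:ℝ)) * ENNReal.ofReal C2 * ENNReal.ofReal C3 *
              S7.Q ((6:ℝ)-d) v) := by
          apply mul_le_mul_left
          calc (∑' x : {x : Fin d → ℤ // ‖x‖ ≤ α * r}, latPow x.1 ((2:ℝ) - d))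
              = ∑' x : Fin d → ℤ,
                  Set.indicator {x : Fin d → ℤ | ‖x‖ ≤ α*(r:ℝ)} (fun x => latPow x ((2:ℝ) - d)) x :=
                tsum_subtype {x : Fin d → ℤ | ‖x‖ ≤ α*(r:ℝ)} (fun x => latPow x ((2:ℝ) - d))
            _ ≤ ∑' x : Fin d → ℤ, (if (S7.nrm x : ℝ) ≤ α*(r:ℝ) then S7.Q (2-(d:ℝ)) x else 0) := by
                apply ENNReal.tsum_le_tsum
                intro x
                rw [Set.indicator_apply]
                split
                · rename_i hmem
                  rw [if_pos (by rw [← S7.norm_eq_nrm]; exact hmem)]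
                  exact S7.latPow_le_Q x _
                · exact zero_le
            _ ≤ _ := hbox (α*(r:ℝ)) hbig
      _ ≤ ENNReal.ofReal (3 * C1 * C2 * C3 * α ^ 2 * ε) := ?_
    -- final numeric bound
    have hMv : ((S7.Mn v : ℝ)) ^ ((6:ℝ) - (d:ℝ)) ≤ ε := by
      have h1 : K ≤ (S7.Mn v : ℝ) := by
        have h2 : ‖v‖ ≤ (S7.Mn v : ℝ) := by
          rw [S7.norm_eq_nrm]
          exact_mod_cast (le_max_left (S7.nrm v) 1)
        linarith [hv]
      calc ((S7.Mn v : ℝ)) ^ ((6:ℝ) - (d:ℝ)) ≤ K ^ ((6:ℝ) - (d:ℝ)) :=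
          Real.rpow_le_rpow_of_nonpos hKpos h1 (by linarith)
        _ ≤ ε := hKe
    rw [S7.Q, ← ENNReal.ofReal_mul (by positivity), ← ENNReal.ofReal_mul (by positivity),
      ← ENNReal.ofReal_mul (by positivity), ← ENNReal.ofReal_mul (by positivity)]
    apply ENNReal.ofReal_le_ofReal
    have key : (α*(r:ℝ)) ^ ((d:ℝ) + (2 - (d:ℝ))) * (2*(r:ℝ)/3) ^ (-2:ℝ) = (9/4) * α^2 := by
      rw [show (d:ℝ) + (2 - (d:ℝ)) = (2:ℝ) from by ring]
      rw [Real.rpow_two, Real.rpow_neg (by linarith) 2, Real.rpow_two]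
      field_simp
      ring
    calc C1 * (α*(r:ℝ)) ^ ((d:ℝ) + (2 - (d:ℝ))) *
          ((2*(r:ℝ)/3) ^ (-2:ℝ) * C2 * C3 * (S7.Mn v : ℝ) ^ ((6:ℝ) - (d:ℝ)))
        = (C1 * C2 * C3 * ((α*(r:ℝ)) ^ ((d:ℝ) + (2 - (d:ℝ))) * (2*(r:ℝ)/3) ^ (-2:ℝ))) *
            ((S7.Mn v : ℝ) ^ ((6:ℝ) - (d:ℝ))) := by ring
      _ = (C1 * C2 * C3 * ((9/4) * α^2)) * ((S7.Mn v : ℝ) ^ ((6:ℝ) - (d:ℝ))) := by rw [key]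
      _ ≤ (C1 * C2 * C3 * ((9/4) * α^2)) * ε := by
          apply mul_le_mul_of_nonneg_left hMv (by positivity)
      _ ≤ 3 * C1 * C2 * C3 * α ^ 2 * ε := by
          have hP : (0:ℝ) ≤ C1*C2*C3*α^2*ε := by positivity
          nlinarith [hP]
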